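/- arXiv:1712.00062 — 2 statements merged into one kernel-verified Lean document; each statement's English description precedes it below -/
import Mathlib

section
/- Let L > 0 and let (L_k)_{k≥1} be a sequence with 1/(3L) ≤ 1/L_k (i.e., L_k ≤ 3L for all k). Define α₀ = 0, A₀ = 0, α_{k+1} = (1 + √(1 + 4 A_k L_{k+1}))/(2 L_{k+1}), A_{k+1} = A_k + α_{k+1}. Then A_k ≥ (k+1)²/(12L) for all k ≥ 1. -/
/-- Growth of the accumulated weights: if `L_k ≤ 3L` for all `k ≥ 1`, then
`A_k ≥ (k+1)²/(12 L)` for all `k ≥ 1`. -/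
theorem A_growth (Lc : ℝ) (hLc : 0 < Lc)
    (L α A : ℕ → ℝ)
    (hL : ∀ k, 1 ≤ k → 0 < L k ∧ L k ≤ 3 * Lc)
    (hα0 : α 0 = 0) (hA0 : A 0 = 0)
    (hα : ∀ k, α (k + 1) =
      (1 + Real.sqrt (1 + 4 * A k * L (k + 1))) / (2 * L (k + 1)))
    (hA : ∀ k, A (k + 1) = A k + α (k + 1)) :
    ∀ k, 1 ≤ k → A k ≥ ((k : ℝ) + 1)^2 / (12 * Lc) := by
  set s := Real.sqrt (3 * Lc) with hsdef
  have hs : 0 < s := Real.sqrt_pos.2 (by positivity)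
  have hs2 : s ^ 2 = 3 * Lc := Real.sq_sqrt (by positivity)
  -- main induction claim
  have main : ∀ k, 1 ≤ k → A k ≥ (((k : ℝ) + 1) / (2 * s)) ^ 2 := by
    intro k hk
    induction k, hk using Nat.le_induction with
    | base =>
      obtain ⟨hL1, hL1'⟩ := hL 1 le_rfl
      have hA1 : A 1 = 1 / L 1 := by
        have := hα 0
        rw [hA 0, hA0, this, hA0]
        rw [show (1 : ℝ) + 4 * 0 * L (0 + 1) = 1 by ring, Real.sqrt_one]
        field_simp
        norm_num
      rw [hA1]
      have h1 : 1 / (3 * Lc) ≤ 1 / L 1 :=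
        one_div_le_one_div_of_le hL1 hL1'
      have : (((1 : ℕ) : ℝ) + 1) ^ 2 / (2 * s) ^ 2 = 1 / (3 * Lc) := by
        push_cast
        rw [show (2 * s) ^ 2 = 4 * s ^ 2 by ring, hs2]
        ring
      rw [div_pow, this]
      exact h1
    | succ k hk ih =>
      set t := ((k : ℝ) + 1) / (2 * s) with htdef
      have ht : 0 ≤ t := by positivity
      obtain ⟨hLk0, hLk⟩ := hL (k + 1) (by omega)
      set Lk := L (k + 1) with hLkdef
      have hr0 : 0 < Real.sqrt Lk := Real.sqrt_pos.2 hLk0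
      have hrs : Real.sqrt Lk ≤ s := Real.sqrt_le_sqrt hLk
      have hr2 : (Real.sqrt Lk) ^ 2 = Lk := Real.sq_sqrt hLk0.le
      have hAk : A k ≥ t ^ 2 := ih
      -- sqrt lower bound
      have h1 : Real.sqrt (1 + 4 * A k * Lk) ≥ 2 * t * Real.sqrt Lk := by
        have hle : (2 * t) ^ 2 * Lk ≤ 1 + 4 * A k * Lk := by nlinarith
        have := Real.sqrt_le_sqrt hle
        rwa [Real.sqrt_mul (by positivity), Real.sqrt_sq (by positivity)] at this
      have hα' : α (k + 1) ≥ (1 + 2 * t * Real.sqrt Lk) / (2 * Lk) := by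
        rw [hα k]
        apply div_le_div_of_nonneg_right _ (by positivity) |>.trans_eq rfl
        linarith
      -- lower bound the increment in terms of s
      set r := Real.sqrt Lk with hrdef
      have hinc : (1 + 2 * t * r) / (2 * Lk) ≥ 1 / (2 * s ^ 2) + t / s := by
        rw [← hr2]
        rw [ge_iff_le, div_add_div _ _ (by positivity) (by positivity),
          div_le_div_iff₀ (by positivity) (by positivity)]
        nlinarith [mul_pos hr0 hs, sq_nonneg (s - r), mul_nonneg ht (sq_nonneg (s - r)),
          mul_nonneg (mul_nonneg ht hr0.le) (sub_nonneg.2 hrs)]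
      have hstep : A (k + 1) ≥ t ^ 2 + 1 / (2 * s ^ 2) + t / s := by
        rw [hA k]
        have := hα'.trans' (le_of_eq rfl)
        linarith [hα', hinc]
      -- conclude
      have : (((k : ℝ) + 1) + 1) / (2 * s) = t + 1 / (2 * s) := by
        rw [htdef]; field_simp
      push_cast
      rw [this]
      have h2s : (0:ℝ) < 2 * s ^ 2 := by positivity
      have expand : (t + 1 / (2 * s)) ^ 2 = t ^ 2 + t / s + 1 / (4 * s ^ 2) := by
        field_simp
        ring
      rw [expand]
      have : 1 / (4 * s ^ 2) ≤ 1 / (2 * s ^ 2) := by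
        apply one_div_le_one_div_of_le (by positivity)
        nlinarith
      linarith
  intro k hk
  have := main k hk
  have heq : (((k : ℝ) + 1) / (2 * s)) ^ 2 = ((k : ℝ) + 1) ^ 2 / (12 * Lc) := by
    rw [div_pow, show (2 * s) ^ 2 = 4 * s ^ 2 by ring, hs2]
    ring_nf
  linarith [this, heq ▸ this]
end

section
/- Suppose (L_k) satisfies L_k > 0 for all k, α_k = (1 + √(1 + 4 A_{k-1} L_k))/(2 L_k) with A_k = A_{k-1} + α_k, A₀ = 0, and suppose 2 L_{k+1} ≥ L_k. Then α_{k+1} ≤ (4 + √2) α_k ≤ 6 α_k for all k ≥ 1, and consequently A_{k+1} ≤ 7 A_k. -/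
/-- If the line-search constants satisfy `2 L_{k+1} ≥ L_k`, then the step sizes
satisfy `α_{k+1} ≤ (4 + √2) α_k ≤ 6 α_k`, hence `A_{k+1} ≤ 7 A_k`. -/
theorem alpha_ratio_bound
    (L α A : ℕ → ℝ)
    (hL : ∀ k, 0 < L k)
    (hhalve : ∀ k, 2 * L (k + 1) ≥ L k)
    (hA0 : A 0 = 0)
    (hα : ∀ k, 1 ≤ k → α k =
      (1 + Real.sqrt (1 + 4 * A (k - 1) * L k)) / (2 * L k))
    (hA : ∀ k, 1 ≤ k → A k = A (k - 1) + α k) :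
    ∀ k, 1 ≤ k →
      α (k + 1) ≤ (4 + Real.sqrt 2) * α k ∧
      (4 + Real.sqrt 2) * α k ≤ 6 * α k ∧
      A (k + 1) ≤ 7 * A k := by
  have hαpos : ∀ k, 1 ≤ k → 0 < α k := by
    intro k hk
    rw [hα k hk]
    have h1 := Real.sqrt_nonneg (1 + 4 * A (k - 1) * L k)
    have h2 := hL k
    positivity
  have hAnn : ∀ k, 0 ≤ A k := by
    intro k
    induction k with
    | zero => rw [hA0]
    | succ n ih =>
      rw [hA (n + 1) (by omega)]
      simp only [Nat.add_sub_cancel]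
      have := hαpos (n + 1) (by omega)
      linarith
  have hs2 : ∀ k, 1 ≤ k →
      Real.sqrt (1 + 4 * A (k - 1) * L k) ^ 2 = 1 + 4 * A (k - 1) * L k := by
    intro k hk
    have h1 := hAnn (k - 1)
    have h2 := (hL k).le
    exact Real.sq_sqrt (by positivity)
  -- key identity: A k = L k * α k ^ 2
  have hkey : ∀ k, 1 ≤ k → A k = L k * α k ^ 2 := by
    intro k hk
    have hs := hs2 k hk
    have hLk := hL k
    rw [hA k hk, hα k hk]
    field_simp
    ring_nf at hs ⊢
    nlinarith [hs]
  -- lower bound: 1 ≤ 2 * L k * α k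
  have hlb : ∀ k, 1 ≤ k → 1 ≤ 2 * L k * α k := by
    intro k hk
    have hs := Real.sqrt_nonneg (1 + 4 * A (k - 1) * L k)
    have hLk := hL k
    rw [hα k hk]
    rw [mul_div_assoc']
    rw [le_div_iff₀ (by positivity)]
    nlinarith
  have sqrt2_nonneg : (0:ℝ) ≤ Real.sqrt 2 := Real.sqrt_nonneg 2
  have sqrt2_sq : Real.sqrt 2 ^ 2 = 2 := Real.sq_sqrt (by norm_num)
  have sqrt2_le : Real.sqrt 2 ≤ 2 := by nlinarith
  intro k hk
  have hαk := hαpos k hk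
  have hAk := hAnn k
  have hL1 := hL (k + 1)
  have hLk := hL k
  have hh := hhalve k
  -- set up α (k+1)
  have hα1 : α (k + 1) = (1 + Real.sqrt (1 + 4 * A k * L (k + 1))) / (2 * L (k + 1)) := by
    have := hα (k + 1) (by omega)
    simpa only [Nat.add_sub_cancel] using this
  set s : ℝ := Real.sqrt (1 + 4 * A k * L (k + 1)) with hsdef
  have hs_nn : 0 ≤ s := Real.sqrt_nonneg _
  have hs_sq : s ^ 2 = 1 + 4 * A k * L (k + 1) :=
    Real.sq_sqrt (by positivity)
  have hAkα : A k = L k * α k ^ 2 := hkey k hk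
  -- bound s ≤ 1 + 2 * √2 * L (k+1) * α k
  have hbound : s ≤ 1 + 2 * Real.sqrt 2 * L (k + 1) * α k := by
    have h1 : (0:ℝ) ≤ 1 + 2 * Real.sqrt 2 * L (k + 1) * α k := by positivity
    have harg : 1 + 4 * A k * L (k + 1) ≤ (1 + 2 * Real.sqrt 2 * L (k + 1) * α k) ^ 2 := by
      nlinarith [mul_pos hL1 hαk, sq_nonneg (L (k + 1) * α k), sq_nonneg (α k),
        mul_nonneg (sub_nonneg.mpr hh) (mul_nonneg hL1.le (sq_nonneg (α k))), sqrt2_sq,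
        mul_nonneg (mul_nonneg sqrt2_nonneg hL1.le) hαk.le]
    calc s ≤ Real.sqrt ((1 + 2 * Real.sqrt 2 * L (k + 1) * α k) ^ 2) :=
          Real.sqrt_le_sqrt harg
      _ = 1 + 2 * Real.sqrt 2 * L (k + 1) * α k := Real.sqrt_sq h1
  have main1 : α (k + 1) ≤ (4 + Real.sqrt 2) * α k := by
    rw [hα1]
    rw [div_le_iff₀ (by positivity)]
    have hlbk := hlb k hk
    -- 1 + s ≤ 2 + 2√2 L(k+1) α k ≤ 8 L(k+1) α k + 2√2 L(k+1) α k
    have h2 : 1 ≤ 4 * L (k + 1) * α k := by nlinarith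
    nlinarith [hbound]
  have main2 : (4 + Real.sqrt 2) * α k ≤ 6 * α k := by nlinarith
  refine ⟨main1, main2, ?_⟩
  have hA1 : A (k + 1) = A k + α (k + 1) := by
    have := hA (k + 1) (by omega)
    simpa only [Nat.add_sub_cancel] using this
  have hαleA : α k ≤ A k := by
    have := hAnn (k - 1)
    rw [hA k hk]; linarith
  rw [hA1]
  nlinarith [main1, main2]
end
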